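/- Let X_1, …, X_m be jointly distributed random variables taking values in finite sets (not necessarily independent), let A ⊆ [m] be nonempty, and let λ ∈ Λ(A) be a fractional partition. Then Σ_{B∈Γ(A)} λ_B · H(X_B | X_{B^c}) ≤ H(X_{[m]}). In particular, the expression H(X_{[m]}) − Σ_{B∈Γ(A)} λ_B H(X_B | X_{B^c}) is nonnegative. -/

import Mathlib

open Finset

/-- Probability that the random variable `X : Ω → α` takes the value `a`,
for a probability mass function `p` on the finite sample space `Ω`. -/
noncomputable def probOf {Ω α : Type*} [Fintype Ω] [DecidableEq α]
    (p : Ω → ℝ) (X : Ω → α) (a : α) : ℝ :=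
  ∑ ω ∈ Finset.univ.filter (fun ω => X ω = a), p ω

/-- Shannon entropy (in nats) of the random variable `X : Ω → α` under the
probability mass function `p`. -/
noncomputable def entropy {Ω α : Type*} [Fintype Ω] [Fintype α] [DecidableEq α]
    (p : Ω → ℝ) (X : Ω → α) : ℝ :=
  ∑ a : α, Real.negMulLog (probOf p X a)

/-- Conditional Shannon entropy `H(X | Y) = H(X, Y) - H(Y)`. -/
noncomputable def condEntropy {Ω α β : Type*} [Fintype Ω]
    [Fintype α] [DecidableEq α] [Fintype β] [DecidableEq β]
    (p : Ω → ℝ) (X : Ω → α) (Y : Ω → β) : ℝ :=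
  entropy p (fun ω => (X ω, Y ω)) - entropy p Y

/-- The tuple random variable `X_B = (X_j : j ∈ B)`. -/
def tupleOn {Ω : Type*} {m : ℕ} {S : Fin m → Type*}
    (X : ∀ j, Ω → S j) (B : Finset (Fin m)) : Ω → (∀ j : B, S j.1) :=
  fun ω j => X j.1 ω

/-- The random variables `X_1, …, X_m` are mutually independent under `p`. -/
def IndepFam {Ω : Type*} [Fintype Ω] {m : ℕ} {S : Fin m → Type*}
    [∀ j, Fintype (S j)] [∀ j, DecidableEq (S j)]
    (p : Ω → ℝ) (X : ∀ j, Ω → S j) : Prop :=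
  ∀ x : ∀ j, S j,
    probOf p (fun ω j => X j ω) x = ∏ j : Fin m, probOf p (X j) (x j)

/-- `Γ(A)`: the family of all nonempty proper subsets `B ⊊ [m]` with `A ⊄ B`. -/
def Gamma (m : ℕ) (A : Finset (Fin m)) : Finset (Finset (Fin m)) :=
  Finset.univ.filter (fun B => B.Nonempty ∧ B ≠ Finset.univ ∧ ¬ A ⊆ B)

/-- `λ ∈ Λ(A)`: a fractional partition, i.e. `0 ≤ λ_B ≤ 1` for every `B ∈ Γ(A)`
and `Σ_{B ∈ Γ(A) : j ∈ B} λ_B = 1` for every `j ∈ [m]`. -/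
def memLambda (m : ℕ) (A : Finset (Fin m)) (lam : Finset (Fin m) → ℝ) : Prop :=
  (∀ B ∈ Gamma m A, 0 ≤ lam B ∧ lam B ≤ 1) ∧
  ∀ j : Fin m, ∑ B ∈ (Gamma m A).filter (fun B => j ∈ B), lam B = 1

/-! ### Auxiliary lemmas -/

section Aux

variable {Ω : Type*} [Fintype Ω]

lemma probOf_nonneg {α : Type*} [DecidableEq α] {p : Ω → ℝ} (hp : ∀ ω, 0 ≤ p ω)
    (X : Ω → α) (a : α) : 0 ≤ probOf p X a :=
  Finset.sum_nonneg fun ω _ => hp ω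

lemma probOf_eq_zero {α : Type*} [DecidableEq α] (p : Ω → ℝ) (X : Ω → α) {a : α}
    (h : ∀ ω, X ω ≠ a) : probOf p X a = 0 := by
  unfold probOf
  rw [Finset.filter_false_of_mem fun ω _ => h ω, Finset.sum_empty]

lemma probOf_congr_fibers {α β : Type*} [DecidableEq α] [DecidableEq β] (p : Ω → ℝ)
    (X : Ω → α) (Y : Ω → β) (h : ∀ ω ω', X ω = X ω' ↔ Y ω = Y ω') (ω : Ω) :
    probOf p X (X ω) = probOf p Y (Y ω) := by
  unfold probOf
  congr 1
  ext ω'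
  simp only [Finset.mem_filter, Finset.mem_univ, true_and]
  exact h ω' ω

/-- If two random variables induce the same partition of the sample space,
they have the same entropy. -/
lemma entropy_congr {α β : Type*} [Fintype α] [DecidableEq α] [Fintype β] [DecidableEq β]
    (p : Ω → ℝ) (X : Ω → α) (Y : Ω → β)
    (h : ∀ ω ω', X ω = X ω' ↔ Y ω = Y ω') :
    entropy p X = entropy p Y := by
  unfold entropy
  have zX : ∀ a ∈ Finset.univ, a ∉ Finset.univ.image X →
      Real.negMulLog (probOf p X a) = 0 := by
    intro a _ ha
    rw [probOf_eq_zero p X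
      (fun ω hω => ha (Finset.mem_image.mpr ⟨ω, Finset.mem_univ ω, hω⟩))]
    exact Real.negMulLog_zero
  have zY : ∀ b ∈ Finset.univ, b ∉ Finset.univ.image Y →
      Real.negMulLog (probOf p Y b) = 0 := by
    intro b _ hb
    rw [probOf_eq_zero p Y
      (fun ω hω => hb (Finset.mem_image.mpr ⟨ω, Finset.mem_univ ω, hω⟩))]
    exact Real.negMulLog_zero
  rw [← Finset.sum_subset (Finset.subset_univ _) zX,
    ← Finset.sum_subset (Finset.subset_univ _) zY]
  refine Finset.sum_bij (fun a ha => Y (Finset.mem_image.mp ha).choose) ?_ ?_ ?_ ?_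
  · intro a ha
    exact Finset.mem_image_of_mem Y (Finset.mem_univ _)
  · intro a1 ha1 a2 ha2 heq
    obtain ⟨-, h1⟩ := (Finset.mem_image.mp ha1).choose_spec
    obtain ⟨-, h2⟩ := (Finset.mem_image.mp ha2).choose_spec
    rw [← h1, ← h2]
    exact (h _ _).mpr heq
  · intro b hb
    obtain ⟨ω, -, rfl⟩ := Finset.mem_image.mp hb
    refine ⟨X ω, Finset.mem_image_of_mem X (Finset.mem_univ ω), ?_⟩
    obtain ⟨-, hs⟩ :=
      (Finset.mem_image.mp (Finset.mem_image_of_mem X (Finset.mem_univ ω))).choose_spec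
    exact (h _ _).mp hs
  · intro a ha
    obtain ⟨-, hs⟩ := (Finset.mem_image.mp ha).choose_spec
    conv_lhs => rw [← hs]
    exact congrArg Real.negMulLog (probOf_congr_fibers p X Y h _)

/-- Entropy of a constant random variable is zero. -/
lemma entropy_const {α : Type*} [Fintype α] [DecidableEq α] (p : Ω → ℝ)
    (hp1 : ∑ ω : Ω, p ω = 1) (X : Ω → α) (hX : ∀ ω ω', X ω = X ω') :
    entropy p X = 0 := by
  unfold entropy
  have z : ∀ a ∈ Finset.univ, a ∉ Finset.univ.image X →
      Real.negMulLog (probOf p X a) = 0 := by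
    intro a _ ha
    rw [probOf_eq_zero p X
      (fun ω hω => ha (Finset.mem_image.mpr ⟨ω, Finset.mem_univ ω, hω⟩))]
    exact Real.negMulLog_zero
  rw [← Finset.sum_subset (Finset.subset_univ _) z]
  refine Finset.sum_eq_zero fun a ha => ?_
  obtain ⟨ω, -, rfl⟩ := Finset.mem_image.mp ha
  have h1 : probOf p X (X ω) = 1 := by
    unfold probOf
    rw [Finset.filter_true_of_mem fun ω' _ => hX ω' ω, hp1]
  rw [h1, Real.negMulLog_one]

/-! ### Marginalization -/

lemma probOf_marg_w {α β γ : Type*} [DecidableEq α] [DecidableEq β] [DecidableEq γ]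
    [Fintype γ] (p : Ω → ℝ) (U : Ω → α) (V : Ω → β) (W : Ω → γ) (u : α) (v : β) :
    probOf p (fun ω => (U ω, V ω)) (u, v)
      = ∑ w : γ, probOf p (fun ω => (U ω, V ω, W ω)) (u, v, w) := by
  unfold probOf
  rw [← Finset.sum_fiberwise_of_maps_to (g := W) (t := Finset.univ)
    (fun ω _ => Finset.mem_univ (W ω)) p]
  refine Finset.sum_congr rfl fun w _ => Finset.sum_congr ?_ fun _ _ => rfl
  ext ω
  simp only [Finset.mem_filter, Finset.mem_univ, true_and, Prod.mk.injEq]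
  tauto

lemma probOf_marg_u {α β γ : Type*} [DecidableEq α] [DecidableEq β] [DecidableEq γ]
    [Fintype α] (p : Ω → ℝ) (U : Ω → α) (V : Ω → β) (W : Ω → γ) (v : β) (w : γ) :
    probOf p (fun ω => (V ω, W ω)) (v, w)
      = ∑ u : α, probOf p (fun ω => (U ω, V ω, W ω)) (u, v, w) := by
  unfold probOf
  rw [← Finset.sum_fiberwise_of_maps_to (g := U) (t := Finset.univ)
    (fun ω _ => Finset.mem_univ (U ω)) p]
  refine Finset.sum_congr rfl fun u _ => Finset.sum_congr ?_ fun _ _ => rfl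
  ext ω
  simp only [Finset.mem_filter, Finset.mem_univ, true_and, Prod.mk.injEq]
  tauto

lemma probOf_marg_fst {α β : Type*} [DecidableEq α] [DecidableEq β] [Fintype α]
    (p : Ω → ℝ) (U : Ω → α) (V : Ω → β) (v : β) :
    probOf p V v = ∑ u : α, probOf p (fun ω => (U ω, V ω)) (u, v) := by
  unfold probOf
  rw [← Finset.sum_fiberwise_of_maps_to (g := U) (t := Finset.univ)
    (fun ω _ => Finset.mem_univ (U ω)) p]
  refine Finset.sum_congr rfl fun u _ => Finset.sum_congr ?_ fun _ _ => rfl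
  ext ω
  simp only [Finset.mem_filter, Finset.mem_univ, true_and, Prod.mk.injEq]
  tauto

lemma probOf_marg_v {α β γ : Type*} [DecidableEq α] [DecidableEq β] [DecidableEq γ]
    [Fintype α] [Fintype γ] (p : Ω → ℝ) (U : Ω → α) (V : Ω → β) (W : Ω → γ) (v : β) :
    probOf p V v = ∑ u : α, ∑ w : γ, probOf p (fun ω => (U ω, V ω, W ω)) (u, v, w) := by
  rw [probOf_marg_fst p U V v]
  exact Finset.sum_congr rfl fun u _ => probOf_marg_w p U V W u v

/-! ### The core numeric inequality -/

lemma negMulLog_sum_expand {ι : Type*} [Fintype ι] (f : ι → ℝ) :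
    Real.negMulLog (∑ i, f i) = ∑ i, -(f i * Real.log (∑ i, f i)) := by
  simp only [Real.negMulLog_eq_neg]
  rw [Finset.sum_neg_distrib, ← Finset.sum_mul]

lemma core_v {α γ : Type*} [Fintype α] [Fintype γ] (b : α → γ → ℝ)
    (hb : ∀ u w, 0 ≤ b u w) :
    (∑ u, ∑ w, Real.negMulLog (b u w)) + Real.negMulLog (∑ u, ∑ w, b u w)
      ≤ (∑ u, Real.negMulLog (∑ w, b u w)) + (∑ w, Real.negMulLog (∑ u, b u w)) := by
  by_cases hN : (0 : ℝ) < ∑ u, ∑ w, b u w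
  · -- the main case
    have hNe : (∑ u, ∑ w, b u w) ≠ 0 := hN.ne'
    -- termwise key inequality
    have key : ∀ u w,
        b u w - (∑ w', b u w') * (∑ u', b u' w) / (∑ u', ∑ w', b u' w')
          ≤ b u w * Real.log (b u w) + b u w * Real.log (∑ u', ∑ w', b u' w')
            - b u w * Real.log (∑ w', b u w') - b u w * Real.log (∑ u', b u' w) := by
      intro u w
      by_cases hbw : 0 < b u w
      · have hR2 : 0 < ∑ w', b u w' :=
          lt_of_lt_of_le hbw (Finset.single_le_sum (fun i _ => hb u i) (Finset.mem_univ w))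
        have hR3 : 0 < ∑ u', b u' w :=
          lt_of_lt_of_le hbw (Finset.single_le_sum (fun i _ => hb i w) (Finset.mem_univ u))
        have ht : (0 : ℝ) <
            (∑ w', b u w') * (∑ u', b u' w) / (b u w * (∑ u', ∑ w', b u' w')) := by
          positivity
        have hlog := Real.log_le_sub_one_of_pos ht
        have hlogeq : Real.log ((∑ w', b u w') * (∑ u', b u' w)
              / (b u w * (∑ u', ∑ w', b u' w')))
            = Real.log (∑ w', b u w') + Real.log (∑ u', b u' w)
              - Real.log (b u w) - Real.log (∑ u', ∑ w', b u' w') := by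
          rw [Real.log_div (by positivity) (by positivity),
            Real.log_mul hR2.ne' hR3.ne', Real.log_mul hbw.ne' hNe]
          ring
        have hbt : b u w * ((∑ w', b u w') * (∑ u', b u' w)
              / (b u w * (∑ u', ∑ w', b u' w')))
            = (∑ w', b u w') * (∑ u', b u' w) / (∑ u', ∑ w', b u' w') := by
          field_simp
        have hle := mul_le_mul_of_nonneg_left hlog hbw.le
        rw [hlogeq] at hle
        nlinarith [hle, hbt]
      · have hb0 : b u w = 0 := le_antisymm (not_lt.mp hbw) (hb u w)
        have : (0 : ℝ) ≤ (∑ w', b u w') * (∑ u', b u' w) / (∑ u', ∑ w', b u' w') := by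
          have h2 : (0:ℝ) ≤ ∑ w', b u w' := Finset.sum_nonneg fun i _ => hb u i
          have h3 : (0:ℝ) ≤ ∑ u', b u' w := Finset.sum_nonneg fun i _ => hb i w
          positivity
        rw [hb0]
        simp only [zero_mul, zero_sub, sub_zero, add_zero, zero_add]
        linarith
    -- the sum of the lower bounds is zero
    have hrow : ∀ u, ∑ w, ((∑ w', b u w') * (∑ u', b u' w) / (∑ u', ∑ w', b u' w'))
        = ∑ w', b u w' := by
      intro u
      rw [← Finset.sum_div, ← Finset.mul_sum,
        show (∑ w, ∑ u', b u' w) = ∑ u', ∑ w', b u' w' from Finset.sum_comm,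
        mul_div_assoc, div_self hNe, mul_one]
    have hS : ∑ u, ∑ w, (b u w - (∑ w', b u w') * (∑ u', b u' w)
        / (∑ u', ∑ w', b u' w')) = 0 := by
      refine Finset.sum_eq_zero fun u _ => ?_
      rw [Finset.sum_sub_distrib, hrow u, sub_self]
    -- expand the difference of both sides as a double sum
    have e1 : (∑ u, Real.negMulLog (∑ w, b u w))
        = ∑ u, ∑ w, -(b u w * Real.log (∑ w', b u w')) :=
      Finset.sum_congr rfl fun u _ => negMulLog_sum_expand (fun w => b u w)
    have e2 : (∑ w, Real.negMulLog (∑ u, b u w))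
        = ∑ u, ∑ w, -(b u w * Real.log (∑ u', b u' w)) := by
      rw [show (∑ w, Real.negMulLog (∑ u, b u w))
          = ∑ w, ∑ u, -(b u w * Real.log (∑ u', b u' w)) from
        Finset.sum_congr rfl fun w _ => negMulLog_sum_expand (fun u => b u w)]
      exact Finset.sum_comm
    have e3 : Real.negMulLog (∑ u, ∑ w, b u w)
        = ∑ u, ∑ w, -(b u w * Real.log (∑ u', ∑ w', b u' w')) := by
      rw [negMulLog_sum_expand (fun u => ∑ w, b u w)]
      refine Finset.sum_congr rfl fun u _ => ?_
      rw [Finset.sum_neg_distrib, ← Finset.sum_mul]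
    have e4 : (∑ u, ∑ w, Real.negMulLog (b u w))
        = ∑ u, ∑ w, -(b u w * Real.log (b u w)) := by
      simp only [Real.negMulLog_eq_neg]
    have hsum := Finset.sum_le_sum fun u (_ : u ∈ Finset.univ) =>
      Finset.sum_le_sum fun w (_ : w ∈ Finset.univ) => key u w
    rw [hS] at hsum
    rw [e1, e2, e3, e4]
    have hcomb :
        (∑ u, ∑ w, -(b u w * Real.log (∑ w', b u w')))
          + (∑ u, ∑ w, -(b u w * Real.log (∑ u', b u' w)))
          - ((∑ u, ∑ w, -(b u w * Real.log (b u w)))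
            + (∑ u, ∑ w, -(b u w * Real.log (∑ u', ∑ w', b u' w'))))
        = ∑ u, ∑ w, (b u w * Real.log (b u w)
            + b u w * Real.log (∑ u', ∑ w', b u' w')
            - b u w * Real.log (∑ w', b u w')
            - b u w * Real.log (∑ u', b u' w)) := by
      simp only [← Finset.sum_add_distrib, ← Finset.sum_sub_distrib]
      exact Finset.sum_congr rfl fun u _ => Finset.sum_congr rfl fun w _ => by ring
    linarith [hcomb, hsum]
  · -- degenerate case: total mass is zero, so all entries vanish
    have hN0 : (∑ u, ∑ w, b u w) = 0 :=
      le_antisymm (not_lt.mp hN)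
        (Finset.sum_nonneg fun u _ => Finset.sum_nonneg fun w _ => hb u w)
    have hz : ∀ u w, b u w = 0 := by
      intro u w
      have h1 : ∀ u ∈ Finset.univ, (0:ℝ) ≤ ∑ w, b u w :=
        fun u _ => Finset.sum_nonneg fun w _ => hb u w
      have h2 : (∑ w, b u w) = 0 :=
        (Finset.sum_eq_zero_iff_of_nonneg h1).mp hN0 u (Finset.mem_univ u)
      exact (Finset.sum_eq_zero_iff_of_nonneg fun w _ => hb u w).mp h2 w (Finset.mem_univ w)
    simp [hz, hN0]

lemma core_ineq {α β γ : Type*} [Fintype α] [Fintype β] [Fintype γ]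
    (a : α → β → γ → ℝ) (ha : ∀ u v w, 0 ≤ a u v w) :
    (∑ u, ∑ v, ∑ w, Real.negMulLog (a u v w))
        + (∑ v, Real.negMulLog (∑ u, ∑ w, a u v w))
      ≤ (∑ u, ∑ v, Real.negMulLog (∑ w, a u v w))
        + (∑ v, ∑ w, Real.negMulLog (∑ u, a u v w)) := by
  have h1 : (∑ u, ∑ v, ∑ w, Real.negMulLog (a u v w))
      = ∑ v, ∑ u, ∑ w, Real.negMulLog (a u v w) := Finset.sum_comm
  have h2 : (∑ u, ∑ v, Real.negMulLog (∑ w, a u v w))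
      = ∑ v, ∑ u, Real.negMulLog (∑ w, a u v w) := Finset.sum_comm
  rw [h1, h2, ← Finset.sum_add_distrib, ← Finset.sum_add_distrib]
  exact Finset.sum_le_sum fun v _ => core_v (fun u w => a u v w) (fun u w => ha u v w)

/-- Submodularity at the level of entropy:
`H(U,V,W) + H(V) ≤ H(U,V) + H(V,W)`. -/
lemma entropy_triple_add_le {α β γ : Type*} [Fintype α] [DecidableEq α]
    [Fintype β] [DecidableEq β] [Fintype γ] [DecidableEq γ]
    (p : Ω → ℝ) (hp : ∀ ω, 0 ≤ p ω) (U : Ω → α) (V : Ω → β) (W : Ω → γ) :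
    entropy p (fun ω => (U ω, V ω, W ω)) + entropy p V
      ≤ entropy p (fun ω => (U ω, V ω)) + entropy p (fun ω => (V ω, W ω)) := by
  have core := core_ineq (fun u v w => probOf p (fun ω => (U ω, V ω, W ω)) (u, v, w))
    (fun u v w => probOf_nonneg hp _ _)
  have h1 : entropy p (fun ω => (U ω, V ω, W ω))
      = ∑ u, ∑ v, ∑ w, Real.negMulLog (probOf p (fun ω => (U ω, V ω, W ω)) (u, v, w)) := by
    unfold entropy
    rw [Fintype.sum_prod_type]
    exact Finset.sum_congr rfl fun u _ => Fintype.sum_prod_type _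
  have h2 : entropy p V
      = ∑ v, Real.negMulLog (∑ u, ∑ w, probOf p (fun ω => (U ω, V ω, W ω)) (u, v, w)) := by
    unfold entropy
    exact Finset.sum_congr rfl fun v _ =>
      congrArg Real.negMulLog (probOf_marg_v p U V W v)
  have h3 : entropy p (fun ω => (U ω, V ω))
      = ∑ u, ∑ v, Real.negMulLog (∑ w, probOf p (fun ω => (U ω, V ω, W ω)) (u, v, w)) := by
    unfold entropy
    rw [Fintype.sum_prod_type]
    exact Finset.sum_congr rfl fun u _ => Finset.sum_congr rfl fun v _ =>
      congrArg Real.negMulLog (probOf_marg_w p U V W u v)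
  have h4 : entropy p (fun ω => (V ω, W ω))
      = ∑ v, ∑ w, Real.negMulLog (∑ u, probOf p (fun ω => (U ω, V ω, W ω)) (u, v, w)) := by
    unfold entropy
    rw [Fintype.sum_prod_type]
    exact Finset.sum_congr rfl fun v _ => Finset.sum_congr rfl fun w _ =>
      congrArg Real.negMulLog (probOf_marg_u p U V W v w)
  rw [h1, h2, h3, h4]
  exact core

end Aux

/-! ### Lemmas about tuples of random variables -/

section Tuples

variable {Ω : Type*} [Fintype Ω] {m : ℕ} {S : Fin m → Type*}
  [∀ j, Fintype (S j)] [∀ j, DecidableEq (S j)]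

lemma tupleOn_eq_iff (X : ∀ j, Ω → S j) (T : Finset (Fin m)) (ω ω' : Ω) :
    tupleOn X T ω = tupleOn X T ω' ↔ ∀ j ∈ T, X j ω = X j ω' := by
  constructor
  · intro h j hj
    exact congrFun h ⟨j, hj⟩
  · intro h
    funext j
    exact h j.1 j.2

/-- Submodularity of entropy for the tuples: for `T ⊆ T'`,
`H(X_{T'∪{j}}) − H(X_{T'}) ≤ H(X_{T∪{j}}) − H(X_T)`. -/
lemma tuple_submod (p : Ω → ℝ) (hp : ∀ ω, 0 ≤ p ω) (X : ∀ j, Ω → S j)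
    (j : Fin m) (T T' : Finset (Fin m)) (hTT' : T ⊆ T') :
    entropy p (tupleOn X (insert j T')) - entropy p (tupleOn X T')
      ≤ entropy p (tupleOn X (insert j T)) - entropy p (tupleOn X T) := by
  have h1 : entropy p (tupleOn X (insert j T'))
      = entropy p (fun ω => (X j ω, tupleOn X T ω, tupleOn X (T' \ T) ω)) := by
    refine entropy_congr p _ _ fun ω ω' => ?_
    rw [tupleOn_eq_iff, Prod.ext_iff, Prod.ext_iff, tupleOn_eq_iff, tupleOn_eq_iff]
    constructor
    · intro h
      exact ⟨h j (Finset.mem_insert_self j T'),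
        fun i hi => h i (Finset.mem_insert_of_mem (hTT' hi)),
        fun i hi => h i (Finset.mem_insert_of_mem (Finset.mem_sdiff.mp hi).1)⟩
    · rintro ⟨ha, hb, hc⟩ i hi
      rcases Finset.mem_insert.mp hi with rfl | hi
      · exact ha
      · by_cases hT : i ∈ T
        · exact hb i hT
        · exact hc i (Finset.mem_sdiff.mpr ⟨hi, hT⟩)
  have h2 : entropy p (tupleOn X T')
      = entropy p (fun ω => (tupleOn X T ω, tupleOn X (T' \ T) ω)) := by
    refine entropy_congr p _ _ fun ω ω' => ?_
    rw [tupleOn_eq_iff, Prod.ext_iff, tupleOn_eq_iff, tupleOn_eq_iff]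
    constructor
    · intro h
      exact ⟨fun i hi => h i (hTT' hi), fun i hi => h i (Finset.mem_sdiff.mp hi).1⟩
    · rintro ⟨hb, hc⟩ i hi
      by_cases hT : i ∈ T
      · exact hb i hT
      · exact hc i (Finset.mem_sdiff.mpr ⟨hi, hT⟩)
  have h3 : entropy p (tupleOn X (insert j T))
      = entropy p (fun ω => (X j ω, tupleOn X T ω)) := by
    refine entropy_congr p _ _ fun ω ω' => ?_
    rw [tupleOn_eq_iff, Prod.ext_iff, tupleOn_eq_iff]
    constructor
    · intro h
      exact ⟨h j (Finset.mem_insert_self j T),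
        fun i hi => h i (Finset.mem_insert_of_mem hi)⟩
    · rintro ⟨ha, hb⟩ i hi
      rcases Finset.mem_insert.mp hi with rfl | hi
      · exact ha
      · exact hb i hi
  have key := entropy_triple_add_le p hp (X j) (tupleOn X T) (tupleOn X (T' \ T))
  rw [h1, h2, h3]
  linarith

/-- Telescoping identity for an arbitrary set function. -/
lemma tele (h : Finset (Fin m) → ℝ) (T B : Finset (Fin m)) :
    h (B ∪ T) = h T + ∑ j ∈ B,
      (h (insert j ((B.filter (fun i => i < j)) ∪ T))
        - h ((B.filter (fun i => i < j)) ∪ T)) := by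
  induction B using Finset.induction_on_max with
  | empty => simp
  | insert a B hmax ih =>
    have hanotin : a ∉ B := fun ha => lt_irrefl a (hmax a ha)
    rw [Finset.sum_insert hanotin]
    have hfa : (insert a B).filter (fun i => i < a) = B := by
      ext i
      simp only [Finset.mem_filter, Finset.mem_insert]
      constructor
      · rintro ⟨rfl | hi, hlt⟩
        · exact absurd hlt (lt_irrefl i)
        · exact hi
      · intro hi
        exact ⟨Or.inr hi, hmax i hi⟩
    have hfb : ∀ j ∈ B, (insert a B).filter (fun i => i < j)
        = B.filter (fun i => i < j) := by
      intro j hj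
      ext i
      simp only [Finset.mem_filter, Finset.mem_insert]
      constructor
      · rintro ⟨rfl | hi, hlt⟩
        · exact absurd (lt_trans (hmax j hj) hlt) (lt_irrefl j)
        · exact ⟨hi, hlt⟩
      · rintro ⟨hi, hlt⟩
        exact ⟨Or.inr hi, hlt⟩
    rw [hfa, Finset.sum_congr rfl (fun j hj => by rw [hfb j hj]),
      Finset.insert_union, ih]
    ring

end Tuples

theorem fractional_partition_condEntropy_sum_le
    {Ω : Type*} [Fintype Ω] {m : ℕ} {S : Fin m → Type*}
    [∀ j, Fintype (S j)] [∀ j, DecidableEq (S j)]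
    (p : Ω → ℝ) (hp : ∀ ω, 0 ≤ p ω) (hp1 : ∑ ω : Ω, p ω = 1)
    (X : ∀ j, Ω → S j)
    (A : Finset (Fin m)) (hA : A.Nonempty)
    (lam : Finset (Fin m) → ℝ) (hlam : memLambda m A lam) :
    ∑ B ∈ Gamma m A, lam B * condEntropy p (tupleOn X B) (tupleOn X Bᶜ)
      ≤ entropy p (fun ω (j : Fin m) => X j ω) ∧
    0 ≤ entropy p (fun ω (j : Fin m) => X j ω)
      - ∑ B ∈ Gamma m A, lam B * condEntropy p (tupleOn X B) (tupleOn X Bᶜ) := by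
  classical
  set e : Finset (Fin m) → ℝ := fun T => entropy p (tupleOn X T) with he
  set H : ℝ := entropy p (fun ω (j : Fin m) => X j ω) with hH
  have hfull : H = e Finset.univ := by
    simp only [hH, he]
    refine entropy_congr p _ _ fun ω ω' => ?_
    rw [funext_iff, tupleOn_eq_iff]
    exact ⟨fun h j _ => h j, fun h j => h j (Finset.mem_univ j)⟩
  set d : Fin m → ℝ := fun j =>
    e (insert j (Finset.univ.filter (fun i => i < j)))
      - e (Finset.univ.filter (fun i => i < j)) with hd
  have hcond : ∀ B : Finset (Fin m),
      condEntropy p (tupleOn X B) (tupleOn X Bᶜ) = H - e Bᶜ := by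
    intro B
    simp only [hH, he]
    unfold condEntropy
    congr 1
    refine entropy_congr p _ _ fun ω ω' => ?_
    rw [Prod.ext_iff, tupleOn_eq_iff, tupleOn_eq_iff]
    constructor
    · rintro ⟨h1, h2⟩
      funext j
      by_cases hB : j ∈ B
      · exact h1 j hB
      · exact h2 j (Finset.mem_compl.mpr hB)
    · intro h
      rw [funext_iff] at h
      exact ⟨fun j _ => h j, fun j _ => h j⟩
  have hgamma : ∀ B : Finset (Fin m), H - e Bᶜ ≤ ∑ j ∈ B, d j := by
    intro B
    have htel := tele e Bᶜ B
    rw [Finset.union_compl] at htel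
    rw [hfull, htel, add_sub_cancel_left]
    refine Finset.sum_le_sum fun j hj => ?_
    simp only [hd, he]
    refine tuple_submod p hp X j _ _ ?_
    intro i hi
    simp only [Finset.mem_filter, Finset.mem_univ, true_and] at hi
    by_cases hB : i ∈ B
    · exact Finset.mem_union_left _ (Finset.mem_filter.mpr ⟨hB, hi⟩)
    · exact Finset.mem_union_right _ (Finset.mem_compl.mpr hB)
  have hempty : e ∅ = 0 := by
    simp only [he]
    refine entropy_const p hp1 _ fun ω ω' => ?_
    funext j
    exact absurd j.2 (Finset.notMem_empty j.1)
  have hsum : ∑ j : Fin m, d j = H := by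
    have htel := tele e ∅ Finset.univ
    rw [Finset.union_empty] at htel
    rw [hfull, htel, hempty, zero_add]
    refine Finset.sum_congr rfl fun j _ => ?_
    simp only [hd]
    rw [Finset.union_empty]
  have main : ∑ B ∈ Gamma m A, lam B * condEntropy p (tupleOn X B) (tupleOn X Bᶜ) ≤ H := by
    calc ∑ B ∈ Gamma m A, lam B * condEntropy p (tupleOn X B) (tupleOn X Bᶜ)
        = ∑ B ∈ Gamma m A, lam B * (H - e Bᶜ) :=
          Finset.sum_congr rfl fun B _ => by rw [hcond B]
      _ ≤ ∑ B ∈ Gamma m A, lam B * ∑ j ∈ B, d j :=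
          Finset.sum_le_sum fun B hB =>
            mul_le_mul_of_nonneg_left (hgamma B) (hlam.1 B hB).1
      _ = ∑ B ∈ Gamma m A, ∑ j ∈ B, lam B * d j :=
          Finset.sum_congr rfl fun B _ => Finset.mul_sum _ _ _
      _ = ∑ B ∈ Gamma m A, ∑ j : Fin m, if j ∈ B then lam B * d j else 0 :=
          Finset.sum_congr rfl fun B _ => by
            rw [Finset.sum_ite_mem, Finset.univ_inter]
      _ = ∑ j : Fin m, ∑ B ∈ Gamma m A, if j ∈ B then lam B * d j else 0 :=
          Finset.sum_comm
      _ = ∑ j : Fin m, (∑ B ∈ (Gamma m A).filter (fun B => j ∈ B), lam B) * d j := by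
          refine Finset.sum_congr rfl fun j _ => ?_
          rw [Finset.sum_mul, Finset.sum_filter]
      _ = ∑ j : Fin m, d j := by
          refine Finset.sum_congr rfl fun j _ => ?_
          rw [hlam.2 j, one_mul]
      _ = H := hsum
  exact ⟨main, by linarith⟩
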